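/- Let G = (V, E) be a connected graph and let uu', vv' ∈ E be two edges with u, u', v, v' pairwise distinct. Then the intersection inequality x_{uv} + x_{u'v'} ≤ x_{uv'} + x_{vu'} is valid for LMC(G) (multicuts of the complete graph lifted from G) if and only if {u, v'} is a vu'-separating node set and {v, u'} is a uv'-separating node set in G. -/

import Mathlib

open Finset

open scoped Classical

variable {V : Type*}

/-- A decomposition of a graph `G`: a partition of the node set all of whose blocks
induce connected subgraphs. -/
def IsDecomposition (G : SimpleGraph V) (P : Set (Set V)) : Prop :=
  Setoid.IsPartition P ∧ ∀ U ∈ P, (G.induce U).Connected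

/-- Two nodes lie in a common block of `P`. -/
def SameBlock (P : Set (Set V)) (u v : V) : Prop :=
  ∃ U ∈ P, u ∈ U ∧ v ∈ U

/-- The edge `e` straddles two distinct blocks of `P`. -/
def Crosses (P : Set (Set V)) (e : Sym2 V) : Prop :=
  ∃ u v, e = s(u, v) ∧ ¬ SameBlock P u v

/-- The multicut of `G` induced by a decomposition `P`. -/
def inducedMulticut (G : SimpleGraph V) (P : Set (Set V)) : Set (Sym2 V) :=
  {e | e ∈ G.edgeSet ∧ Crosses P e}

/-- `M` is a multicut of `G`. -/
def IsMulticut (G : SimpleGraph V) (M : Set (Sym2 V)) : Prop :=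
  ∃ P, IsDecomposition G P ∧ M = inducedMulticut G P

/-- The characteristic vector (in the ambient space `Sym2 V → ℝ`, with coordinates
outside the edge set of `H` pinned to `0`) of the multicut of `H` induced by `P`. -/
noncomputable def multicutVec (H : SimpleGraph V) (P : Set (Set V)) : Sym2 V → ℝ :=
  fun e => if e ∈ H.edgeSet ∧ Crosses P e then 1 else 0

/-- Characteristic vectors of multicuts of `H` lifted from `G`. -/
def liftedVectors (G H : SimpleGraph V) : Set (Sym2 V → ℝ) :=
  {x | ∃ P, IsDecomposition G P ∧ x = multicutVec H P}

/-- The lifted multicut polytope with respect to `G` and `H`. -/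
def LMC (G H : SimpleGraph V) : Set (Sym2 V → ℝ) :=
  convexHull ℝ (liftedVectors G H)

/-- The inequality `f x ≤ b` is valid for `P` and its equality set has affine dimension
`|E ∪ F| - 1`, i.e. one less than the dimension of the corresponding lifted multicut
polytope for the augmented graph `H`. -/
def DefinesFacet (H : SimpleGraph V) (P : Set (Sym2 V → ℝ))
    (f : (Sym2 V → ℝ) → ℝ) (b : ℝ) : Prop :=
  (∀ x ∈ P, f x ≤ b) ∧
  Module.finrank ℝ (affineSpan ℝ {x | x ∈ P ∧ f x = b}).direction + 1 = Nat.card H.edgeSet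

/-- `S` separates `a` from `b` in `G`: every `a b`-path meets `S`. -/
def IsSeparating {V : Type*} (G : SimpleGraph V) (a b : V) (S : Set V) : Prop :=
  ∀ p : G.Walk a b, p.IsPath → ∃ w ∈ S, w ∈ p.support



lemma sameBlock_comm {P : Set (Set V)} {a b : V} (h : SameBlock P a b) : SameBlock P b a :=
  let ⟨U, hU, ha, hb⟩ := h; ⟨U, hU, hb, ha⟩

lemma sameBlock_trans {P : Set (Set V)} (hP : Setoid.IsPartition P) {a b c : V}
    (h1 : SameBlock P a b) (h2 : SameBlock P b c) : SameBlock P a c := by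
  obtain ⟨U, hU, ha, hb⟩ := h1
  obtain ⟨W, hW, hb', hc⟩ := h2
  obtain ⟨B, -, hun⟩ := hP.2 b
  have hUW : U = W := (hun U ⟨hU, hb⟩).trans (hun W ⟨hW, hb'⟩).symm
  exact ⟨U, hU, ha, hUW ▸ hc⟩

lemma crosses_iff {P : Set (Set V)} {a b : V} : Crosses P s(a, b) ↔ ¬ SameBlock P a b := by
  constructor
  · rintro ⟨x, y, hxy, h⟩
    rw [Sym2.eq_iff] at hxy
    rcases hxy with ⟨rfl, rfl⟩ | ⟨rfl, rfl⟩
    · exact h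
    · exact fun hs => h (sameBlock_comm hs)
  · exact fun h => ⟨a, b, rfl, h⟩

lemma multicutVec_top_apply (P : Set (Set V)) {a b : V} (hab : a ≠ b) :
    multicutVec ⊤ P s(a, b) = if SameBlock P a b then 0 else 1 := by
  by_cases h : SameBlock P a b <;>
    simp [multicutVec, crosses_iff, h, hab]

lemma reachable_induce {G : SimpleGraph V} {C : Set V} :
    ∀ {a b : V} (p : G.Walk a b), (∀ w ∈ p.support, w ∈ C) →
      ∀ (ha : a ∈ C) (hb : b ∈ C), (G.induce C).Reachable ⟨a, ha⟩ ⟨b, hb⟩ := by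
  intro a b p
  induction p with
  | nil => intro _ ha hb; exact SimpleGraph.Reachable.refl _
  | @cons a c b h q ih =>
      intro hp ha hb
      have hc : c ∈ C := hp c (by simp)
      have hadj : (G.induce C).Adj ⟨a, ha⟩ ⟨c, hc⟩ := h
      exact hadj.reachable.trans (ih (fun w hw => hp w (by simp [hw])) hc hb)

lemma exists_walk_of_mem_block {G : SimpleGraph V} {P : Set (Set V)}
    (hP : IsDecomposition G P) {U : Set V} (hU : U ∈ P) {a b : V} (ha : a ∈ U) (hb : b ∈ U) :
    ∃ p : G.Walk a b, ∀ w ∈ p.support, w ∈ U := by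
  obtain ⟨q⟩ := (hP.2 U hU).preconnected ⟨a, ha⟩ ⟨b, hb⟩
  refine ⟨q.map (SimpleGraph.Embedding.induce U).toHom, ?_⟩
  intro w hw
  replace hw : w ∈ q.support.map (SimpleGraph.Embedding.induce (G := G) U).toHom := by
    rw [← SimpleGraph.Walk.support_map]; exact hw
  obtain ⟨x, -, rfl⟩ := List.mem_map.mp hw
  exact x.2

/-- The equivalence relation: equal, or joined by a walk avoiding `S` (with both
endpoints outside `S`). -/
def sepSetoid (G : SimpleGraph V) (S : Set V) : Setoid V :=
  ⟨fun a b => a = b ∨ (a ∉ S ∧ b ∉ S ∧ ∃ p : G.Walk a b, ∀ w ∈ p.support, w ∉ S), by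
    refine ⟨fun a => Or.inl rfl, ?_, ?_⟩
    · rintro a b (rfl | ⟨ha, hb, p, hp⟩)
      · exact Or.inl rfl
      · exact Or.inr ⟨hb, ha, p.reverse, fun w hw =>
          hp w (by simpa [SimpleGraph.Walk.support_reverse] using hw)⟩
    · rintro a b c (rfl | ⟨ha, hb, p, hp⟩) h2
      · exact h2
      · rcases h2 with rfl | ⟨hb', hc, q, hq⟩
        · exact Or.inr ⟨ha, hb, p, hp⟩
        · refine Or.inr ⟨ha, hc, p.append q, fun w hw => ?_⟩
          rcases (SimpleGraph.Walk.mem_support_append_iff p q).mp hw with h | h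
          · exact hp w h
          · exact hq w h⟩

lemma sepSetoid_decomposition (G : SimpleGraph V) (S : Set V) :
    IsDecomposition G (sepSetoid G S).classes := by
  refine ⟨Setoid.isPartition_classes _, ?_⟩
  rintro U ⟨y, rfl⟩
  rw [SimpleGraph.connected_iff]
  have hy : y ∈ {x | sepSetoid G S x y} := Or.inl rfl
  have key : ∀ (a : V) (ha : a ∈ {x | sepSetoid G S x y}),
      (G.induce {x | sepSetoid G S x y}).Reachable ⟨a, ha⟩ ⟨y, hy⟩ := by
    intro a ha
    rcases ha with rfl | ⟨haS, hyS, p, hp⟩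
    · exact SimpleGraph.Reachable.refl _
    · refine reachable_induce p (fun w hw => ?_) _ _
      exact Or.inr ⟨hp w hw, hyS, p.dropUntil w hw,
        fun z hz => hp z (SimpleGraph.Walk.support_dropUntil_subset p hw hz)⟩
  exact ⟨fun a b => ((key a a.2).trans (key b b.2).symm).elim (fun r => by
    cases a; cases b; exact ⟨r⟩ ), ⟨⟨y, hy⟩⟩⟩

lemma sameBlock_sepSetoid {G : SimpleGraph V} {S : Set V} {a b : V} :
    SameBlock (sepSetoid G S).classes a b ↔ sepSetoid G S a b :=
  (Setoid.rel_iff_exists_classes _).symm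

lemma generator_ineq {G : SimpleGraph V} {P : Set (Set V)} (hP : IsDecomposition G P)
    {u u' v v' : V}
    (hs1 : IsSeparating G v u' {u, v'}) (hs2 : IsSeparating G u v' {v, u'})
    (huv : u ≠ v) (huv' : u ≠ v') (hu'v : u' ≠ v) (hu'v' : u' ≠ v') :
    multicutVec ⊤ P s(u, v) + multicutVec ⊤ P s(u', v') ≤
      multicutVec ⊤ P s(u, v') + multicutVec ⊤ P s(v, u') := by
  have hPp := hP.1
  have fC : SameBlock P u v' → SameBlock P u v ∨ SameBlock P u' v' := by
    rintro ⟨U, hU, hu, hv'⟩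
    obtain ⟨p, hp⟩ := exists_walk_of_mem_block hP hU hu hv'
    obtain ⟨w, hw, hws⟩ := hs2 p.toPath.1 p.toPath.2
    have hwU : w ∈ U := hp w (SimpleGraph.Walk.support_toPath_subset p hws)
    rcases hw with rfl | hw
    · exact Or.inl ⟨U, hU, hu, hwU⟩
    · rw [Set.mem_singleton_iff] at hw; subst hw
      exact Or.inr ⟨U, hU, hwU, hv'⟩
  have fD : SameBlock P v u' → SameBlock P u v ∨ SameBlock P u' v' := by
    rintro ⟨U, hU, hv, hu'⟩
    obtain ⟨p, hp⟩ := exists_walk_of_mem_block hP hU hv hu'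
    obtain ⟨w, hw, hws⟩ := hs1 p.toPath.1 p.toPath.2
    have hwU : w ∈ U := hp w (SimpleGraph.Walk.support_toPath_subset p hws)
    rcases hw with rfl | hw
    · exact Or.inl ⟨U, hU, hwU, hv⟩
    · rw [Set.mem_singleton_iff] at hw; subst hw
      exact Or.inr ⟨U, hU, hu', hwU⟩
  rw [multicutVec_top_apply P huv, multicutVec_top_apply P hu'v',
    multicutVec_top_apply P huv', multicutVec_top_apply P hu'v.symm]
  by_cases hC : SameBlock P u v'
  · by_cases hD : SameBlock P v u'
    · have hAB : SameBlock P u v ∧ SameBlock P u' v' := by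
        rcases fC hC with hA | hB
        · exact ⟨hA, sameBlock_trans hPp (sameBlock_comm hD)
            (sameBlock_trans hPp (sameBlock_comm hA) hC)⟩
        · exact ⟨sameBlock_trans hPp hC
            (sameBlock_trans hPp (sameBlock_comm hB) (sameBlock_comm hD)), hB⟩
      simp [hC, hD, hAB.1, hAB.2]
    · rcases fC hC with hA | hB
      · simp [hC, hD, hA]; split_ifs <;> norm_num
      · simp [hC, hD, hB]; split_ifs <;> norm_num
  · by_cases hD : SameBlock P v u'
    · rcases fD hD with hA | hB
      · simp [hC, hD, hA]; split_ifs <;> norm_num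
      · simp [hC, hD, hB]; split_ifs <;> norm_num
    · simp [hC, hD]; split_ifs <;> norm_num

/-- for edges `uu'` and `vv'` of a connected graph `G` with `u,u',v,v'`
pairwise distinct, the intersection inequality `x_{uv} + x_{u'v'} ≤ x_{uv'} + x_{vu'}`
is valid for `LMC(G)` iff `{u,v'}` is `vu'`-separating and `{v,u'}` is
`uv'`-separating. -/
theorem intersection_inequality_valid_iff
    {V : Type*} [Fintype V] (G : SimpleGraph V) (hG : G.Connected)
    (u u' v v' : V) (huu' : G.Adj u u') (hvv' : G.Adj v v')
    (hd : List.Pairwise (· ≠ ·) [u, u', v, v']) :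
    (∀ x ∈ LMC G ⊤, x s(u, v) + x s(u', v') ≤ x s(u, v') + x s(v, u')) ↔
      (IsSeparating G v u' {u, v'} ∧ IsSeparating G u v' {v, u'}) := by
  simp only [List.pairwise_cons, List.mem_cons, List.not_mem_nil, List.mem_singleton] at hd
  have h1 : u ≠ u' := hd.1 u' (by simp)
  have h2 : u ≠ v := hd.1 v (by simp)
  have h3 : u ≠ v' := hd.1 v' (by simp)
  have h4 : u' ≠ v := hd.2.1 v (by simp)
  have h5 : u' ≠ v' := hd.2.1 v' (by simp)
  have h6 : v ≠ v' := hd.2.2.1 v' (by simp)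
  constructor
  · intro hval
    constructor
    · intro p hp
      by_contra hcon
      push_neg at hcon
      have hun : u ∉ p.support := hcon u (by simp)
      have hv'n : v' ∉ p.support := hcon v' (by simp)
      set S : Set V := {u, v'} with hS
      set P := (sepSetoid G S).classes with hPdef
      have hx : multicutVec ⊤ P ∈ LMC G ⊤ :=
        subset_convexHull ℝ _ ⟨P, sepSetoid_decomposition G S, rfl⟩
      have hineq := hval _ hx
      have e1 : multicutVec ⊤ P s(v, u') = 0 := by
        rw [multicutVec_top_apply P h4.symm, if_pos]
        refine sameBlock_sepSetoid.mpr (Or.inr ⟨?_, ?_, p, ?_⟩)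
        · simp [hS, h2.symm, h6]
        · simp [hS, h1.symm, h5]
        · intro w hw
          simp only [hS, Set.mem_insert_iff, Set.mem_singleton_iff]
          push_neg
          exact ⟨fun h => hun (h ▸ hw), fun h => hv'n (h ▸ hw)⟩
      have e2 : multicutVec ⊤ P s(u, v) = 1 := by
        rw [multicutVec_top_apply P h2, if_neg]
        intro hsb
        rcases sameBlock_sepSetoid.mp hsb with h | ⟨hm, -⟩
        · exact h2 h
        · exact hm (by simp [hS])
      have e3 : multicutVec ⊤ P s(u', v') = 1 := by
        rw [multicutVec_top_apply P h5, if_neg]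
        intro hsb
        rcases sameBlock_sepSetoid.mp hsb with h | ⟨-, hm, -⟩
        · exact h5 h
        · exact hm (by simp [hS])
      have e4 : multicutVec ⊤ P s(u, v') = 1 := by
        rw [multicutVec_top_apply P h3, if_neg]
        intro hsb
        rcases sameBlock_sepSetoid.mp hsb with h | ⟨hm, -⟩
        · exact h3 h
        · exact hm (by simp [hS])
      rw [e1, e2, e3, e4] at hineq
      linarith
    · intro p hp
      by_contra hcon
      push_neg at hcon
      have hvn : v ∉ p.support := hcon v (by simp)
      have hu'n : u' ∉ p.support := hcon u' (by simp)
      set S : Set V := {v, u'} with hS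
      set P := (sepSetoid G S).classes with hPdef
      have hx : multicutVec ⊤ P ∈ LMC G ⊤ :=
        subset_convexHull ℝ _ ⟨P, sepSetoid_decomposition G S, rfl⟩
      have hineq := hval _ hx
      have e1 : multicutVec ⊤ P s(u, v') = 0 := by
        rw [multicutVec_top_apply P h3, if_pos]
        refine sameBlock_sepSetoid.mpr (Or.inr ⟨?_, ?_, p, ?_⟩)
        · simp [hS, h2, h1]
        · simp [hS, h6.symm, h5.symm]
        · intro w hw
          simp only [hS, Set.mem_insert_iff, Set.mem_singleton_iff]
          push_neg
          exact ⟨fun h => hvn (h ▸ hw), fun h => hu'n (h ▸ hw)⟩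
      have e2 : multicutVec ⊤ P s(u, v) = 1 := by
        rw [multicutVec_top_apply P h2, if_neg]
        intro hsb
        rcases sameBlock_sepSetoid.mp hsb with h | ⟨-, hm, -⟩
        · exact h2 h
        · exact hm (by simp [hS])
      have e3 : multicutVec ⊤ P s(u', v') = 1 := by
        rw [multicutVec_top_apply P h5, if_neg]
        intro hsb
        rcases sameBlock_sepSetoid.mp hsb with h | ⟨hm, -⟩
        · exact h5 h
        · exact hm (by simp [hS])
      have e4 : multicutVec ⊤ P s(v, u') = 1 := by
        rw [multicutVec_top_apply P h4.symm, if_neg]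
        intro hsb
        rcases sameBlock_sepSetoid.mp hsb with h | ⟨hm, -⟩
        · exact h4 h.symm
        · exact hm (by simp [hS])
      rw [e1, e2, e3, e4] at hineq
      linarith
  · rintro ⟨hs1, hs2⟩ x hx
    have hconv : Convex ℝ
        {x : Sym2 V → ℝ | x s(u, v) + x s(u', v') ≤ x s(u, v') + x s(v, u')} := by
      intro y hy z hz a b ha hb hab
      simp only [Set.mem_setOf_eq, Pi.add_apply, Pi.smul_apply, smul_eq_mul] at *
      have hy' := mul_le_mul_of_nonneg_left hy ha
      have hz' := mul_le_mul_of_nonneg_left hz hb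
      nlinarith
    refine convexHull_min ?_ hconv hx
    rintro y ⟨P, hP, rfl⟩
    exact generator_ineq hP hs1 hs2 h2 h3 h4 h5
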